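/- Let π be a subset seed of span m over a finite alphabet A with distinguished letter 1, and let s = s_1…s_n ∈ A^n be a word such that q = ψ*((∅,0), s) is a non-final state, say q = (X,t). Then: (a) t equals the length of the longest suffix of s consisting entirely of the letter 1; and (b) X = {x ∈ R_π : x ≤ n − t and s_{(n−t)−x+i} ∈ π_i for all i ∈ [1..x]}, i.e., X consists of exactly those positions x ∈ R_π such that the prefix π_1⋯π_x of π matches the suffix of length x of s_1⋯s_{n−t}. -/

import Mathlib

/-- The set `R_π` of non-`#` positions of a subset seed `π` of span `m` over an alphabet
with distinguished "match" letter `one`: positions `i ∈ [1..m]` with `π i ≠ {one}`. -/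
def Rpi {A : Type*} [DecidableEq A] (m : ℕ) (one : A) (π : ℕ → Finset A) : Finset ℕ :=
  (Finset.Icc 1 m).filter (fun i => π i ≠ {one})

/-- Transition function `ψ` of the subset seed automaton `S_π`.  States are pairs
`(X, t)` with `X : Finset ℕ` and `t : ℕ`; note that `max (X ∪ {0}) = X.sup id`.
A state is final when `max (X ∪ {0}) + t ≥ m`; final states are fixed.  On a
non-final state `(X, t)`: reading `one` yields `(X, t+1)`; reading `a ≠ one`
yields `(X_U ∪ X_V, 0)` with `X_U = {x ∈ R_π : x ≤ t+1 ∧ a ∈ π x}` and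
`X_V = {x+t+1 : x ∈ X, x+t+1 ≤ m, a ∈ π (x+t+1)}`. -/
def seedStep {A : Type*} [DecidableEq A] (m : ℕ) (one : A) (π : ℕ → Finset A)
    (q : Finset ℕ × ℕ) (a : A) : Finset ℕ × ℕ :=
  if m ≤ q.1.sup id + q.2 then q
  else if a = one then (q.1, q.2 + 1)
  else ((Rpi m one π).filter (fun x => x ≤ q.2 + 1 ∧ a ∈ π x) ∪
        ((q.1.filter (fun x => x + q.2 + 1 ≤ m ∧ a ∈ π (x + q.2 + 1))).image
          (fun x => x + q.2 + 1)), 0)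

/-- The extension `ψ*` of the transition function of `S_π` to words,
reading letters left to right from state `q`. -/
def seedRun {A : Type*} [DecidableEq A] (m : ℕ) (one : A) (π : ℕ → Finset A)
    (q : Finset ℕ × ℕ) : List A → Finset ℕ × ℕ
  | [] => q
  | a :: s => seedRun m one π (seedStep m one π q a) s


section Helpers
variable {A : Type*} [DecidableEq A]

lemma seedRun_append (m : ℕ) (one : A) (π : ℕ → Finset A) (q : Finset ℕ × ℕ)
    (s : List A) (a : A) :
    seedRun m one π q (s ++ [a]) = seedStep m one π (seedRun m one π q s) a := by
  induction s generalizing q with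
  | nil => rfl
  | cons b s ih =>
    show seedRun m one π (seedStep m one π q b) (s ++ [a]) = _
    rw [seedRun, ih]

lemma pred_of_lt_takeWhile {α : Type*} {p : α → Bool} {l : List α} {i : ℕ}
    (h : i < (l.takeWhile p).length) (h' : i < l.length) : p l[i] := by
  have hm : (l.takeWhile p)[i] ∈ l.takeWhile p := List.getElem_mem h
  have := List.mem_takeWhile_imp hm
  rwa [(List.takeWhile_prefix p).getElem h] at this

lemma not_pred_takeWhile_length {α : Type*} {p : α → Bool} {l : List α}
    (h : (l.takeWhile p).length < l.length) : ¬ p (l[(l.takeWhile p).length]'h) := by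
  induction l with
  | nil => simp at h
  | cons a l ih =>
    by_cases hp : p a
    · simp only [List.takeWhile_cons, hp, if_true, List.length_cons,
        Nat.add_lt_add_iff_right, List.getElem_cons_succ] at h ⊢
      simpa using ih h
    · simp [List.takeWhile_cons, hp]

lemma trail_len_le (one : A) (s : List A) :
    (s.reverse.takeWhile (fun a => decide (a = one))).length ≤ s.length := by
  simpa using (List.takeWhile_prefix (l := s.reverse) (fun a => decide (a = one))).length_le

lemma trail_one (one : A) (s : List A) {j : ℕ}
    (hj1 : s.length - (s.reverse.takeWhile (fun a => decide (a = one))).length ≤ j)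
    (hj2 : j < s.length) : s.getD j one = one := by
  have ht := trail_len_le one s
  have hrl : s.reverse.length = s.length := List.length_reverse
  have hb : s.length - 1 - j < s.reverse.length := by omega
  have := pred_of_lt_takeWhile (p := fun a => decide (a = one))
    (l := s.reverse) (i := s.length - 1 - j) (by omega) hb
  rw [List.getElem_reverse] at this
  simp only [decide_eq_true_eq] at this
  rw [List.getD_eq_getElem s one hj2]
  have harith : s.length - 1 - (s.length - 1 - j) = j := by omega
  simp only [harith] at this
  exact this

lemma trail_stop (one : A) (s : List A)
    (h : (s.reverse.takeWhile (fun a => decide (a = one))).length < s.length) :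
    s.getD (s.length - (s.reverse.takeWhile (fun a => decide (a = one))).length - 1) one ≠ one := by
  have ht := trail_len_le one s
  have hrl : s.reverse.length = s.length := List.length_reverse
  have := not_pred_takeWhile_length (p := fun a => decide (a = one)) (l := s.reverse) (by omega)
  rw [List.getElem_reverse] at this
  simp only [decide_eq_true_eq] at this
  rw [List.getD_eq_getElem s one (by omega)]
  have harith : s.length - 1 - (s.reverse.takeWhile (fun a => decide (a = one))).length
      = s.length - (s.reverse.takeWhile (fun a => decide (a = one))).length - 1 := by omega
  simp only [harith] at this
  exact this

end Helpers

lemma forall₂_match_iff {A : Type*} (π : ℕ → Finset A) (one : A) (s : List A) (k x : ℕ)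
    (hk : k ≤ s.length) :
    List.Forall₂ (fun (b : Finset A) (a : A) => a ∈ b)
      ((List.range x).map (fun i => π (i + 1))) ((s.take k).drop (k - x)) ↔
    x ≤ k ∧ ∀ i < x, s.getD (k - x + i) one ∈ π (i + 1) := by
  rw [List.forall₂_iff_get]
  simp only [List.length_map, List.length_range, List.length_drop, List.length_take,
    List.get_eq_getElem, List.getElem_map, List.getElem_range, List.getElem_drop,
    List.getElem_take]
  constructor
  · rintro ⟨hl, hget⟩
    have hxk : x ≤ k := by omega
    refine ⟨hxk, fun i hi => ?_⟩
    have hb : k - x + i < s.length := by omega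
    rw [List.getD_eq_getElem s one hb]
    exact hget i hi (by omega)
  · rintro ⟨hxk, hm⟩
    refine ⟨by omega, fun i h₁ h₂ => ?_⟩
    have hb : k - x + i < s.length := by omega
    have := hm i h₁
    rwa [List.getD_eq_getElem s one hb] at this

lemma Rpi_mem_iff {A : Type*} [DecidableEq A] (m : ℕ) (one : A) (π : ℕ → Finset A) (x : ℕ) :
    x ∈ Rpi m one π ↔ 1 ≤ x ∧ x ≤ m ∧ π x ≠ {one} := by
  simp [Rpi, Finset.mem_filter, Finset.mem_Icc, and_assoc]

lemma seedAux {A : Type*} [DecidableEq A] (m : ℕ) (one : A) (π : ℕ → Finset A)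
    (hπ : ∀ i ∈ Finset.Icc 1 m, one ∈ π i) :
    ∀ (s : List A) (X : Finset ℕ) (t : ℕ),
      seedRun m one π (∅, 0) s = (X, t) → X.sup id + t < m →
      t = (s.reverse.takeWhile (fun a => decide (a = one))).length ∧
      ∀ x : ℕ, x ∈ X ↔ x ∈ Rpi m one π ∧ x ≤ s.length - t ∧
        ∀ i < x, s.getD (s.length - t - x + i) one ∈ π (i + 1) := by
  intro s
  induction s using List.reverseRecOn with
  | nil =>
    intro X t hq hnf
    injection hq with h1 h2
    subst h1; subst h2
    refine ⟨by simp, fun x => ?_⟩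
    simp only [Finset.notMem_empty, false_iff, List.length_nil, Rpi_mem_iff]
    rintro ⟨⟨hx1, -, -⟩, hx2, -⟩
    omega
  | append_singleton s a ih =>
    intro X t hq hnf
    rw [seedRun_append] at hq
    rcases h' : seedRun m one π (∅, 0) s with ⟨X', t'⟩
    rw [h'] at hq
    have hq'nf : ¬ m ≤ X'.sup id + t' := by
      intro h
      rw [seedStep, if_pos h] at hq
      injection hq with h1 h2
      subst h1; subst h2
      omega
    obtain ⟨ht', hX'⟩ := ih X' t' h' (by omega)
    have ht'le : t' ≤ s.length := ht' ▸ trail_len_le one s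
    have htr1 : ∀ j, s.length - t' ≤ j → j < s.length → s.getD j one = one := by
      intro j hj1 hj2
      exact trail_one one s (by omega) hj2
    have htr2 : t' < s.length → s.getD (s.length - t' - 1) one ≠ one := by
      intro h
      have := trail_stop one s (by omega)
      rwa [← ht'] at this
    -- also rewrite htr1's bound via ht'
    by_cases hao : a = one
    · subst hao
      rw [seedStep, if_neg hq'nf, if_pos rfl] at hq
      injection hq with h1 h2
      subst h1; subst h2
      constructor
      · simp [List.takeWhile_cons, ht']
      · intro x
        rw [hX' x]
        simp only [List.length_append, List.length_singleton]
        rw [show s.length + 1 - (t' + 1) = s.length - t' from by omega]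
        constructor
        · rintro ⟨h1, h2, h3⟩
          refine ⟨h1, h2, fun i hi => ?_⟩
          rw [List.getD_append _ _ _ _ (by omega)]
          exact h3 i hi
        · rintro ⟨h1, h2, h3⟩
          refine ⟨h1, h2, fun i hi => ?_⟩
          have := h3 i hi
          rwa [List.getD_append _ _ _ _ (by omega)] at this
    · rw [seedStep, if_neg hq'nf, if_neg hao] at hq
      injection hq with h1 h2
      subst h1; subst h2
      have hga : (s ++ [a]).getD s.length one = a := by
        rw [List.getD_append_right _ _ _ _ (le_refl _)]
        simp
      constructor
      · simp [List.takeWhile_cons, hao]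
      · intro x
        simp only [Finset.mem_union, Finset.mem_filter, Finset.mem_image,
          List.length_append, List.length_singleton, Nat.sub_zero]
        constructor
        · rintro (⟨hxR, hxle, hxa⟩ | ⟨x'', ⟨hx''X, hxm, hxa⟩, rfl⟩)
          · -- X_U case
            obtain ⟨hx1, hxm, -⟩ := (Rpi_mem_iff m one π x).1 hxR
            refine ⟨hxR, by omega, fun i hi => ?_⟩
            rcases eq_or_lt_of_le (Nat.succ_le_of_lt hi) with he | hlt
            · have hix : i + 1 = x := he
              rw [show s.length + 1 - x + i = s.length from by omega, hga, hix]
              exact hxa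
            · rw [List.getD_append _ _ _ _ (by omega),
                htr1 (s.length + 1 - x + i) (by omega) (by omega)]
              exact hπ (i + 1) (Finset.mem_Icc.mpr ⟨by omega, by omega⟩)
          · -- X_V case
            obtain ⟨hx''R, hx''le, hx''m⟩ := (hX' x'').1 hx''X
            obtain ⟨hx''1, hx''mm, -⟩ := (Rpi_mem_iff m one π x'').1 hx''R
            refine ⟨?_, by omega, fun i hi => ?_⟩
            · rw [Rpi_mem_iff]
              refine ⟨by omega, hxm, fun hsing => ?_⟩
              rw [hsing, Finset.mem_singleton] at hxa
              exact hao hxa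
            · by_cases hi1 : i < x''
              · rw [List.getD_append _ _ _ _ (by omega),
                  show s.length + 1 - (x'' + t' + 1) + i = s.length - t' - x'' + i from by omega]
                exact hx''m i hi1
              · rcases eq_or_lt_of_le (Nat.succ_le_of_lt hi) with he | hlt
                · have hix : i + 1 = x'' + t' + 1 := he
                  rw [show s.length + 1 - (x'' + t' + 1) + i = s.length from by omega, hga, hix]
                  exact hxa
                · rw [List.getD_append _ _ _ _ (by omega),
                    htr1 (s.length + 1 - (x'' + t' + 1) + i) (by omega) (by omega)]
                  exact hπ (i + 1) (Finset.mem_Icc.mpr ⟨by omega, by omega⟩)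
        · rintro ⟨hxR, hxle, hmatch⟩
          obtain ⟨hx1, hxm, hxne⟩ := (Rpi_mem_iff m one π x).1 hxR
          have hxa : a ∈ π x := by
            have := hmatch (x - 1) (by omega)
            rw [show s.length + 1 - x + (x - 1) = s.length from by omega, hga,
              show x - 1 + 1 = x from by omega] at this
            exact this
          by_cases hxt : x ≤ t' + 1
          · exact Or.inl ⟨hxR, hxt, hxa⟩
          · right
            have hb : s.getD (s.length - t' - 1) one ∈ π (x - t' - 1) := by
              have := hmatch (x - t' - 2) (by omega)
              rw [List.getD_append _ _ _ _ (by omega),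
                show s.length + 1 - x + (x - t' - 2) = s.length - t' - 1 from by omega,
                show x - t' - 2 + 1 = x - t' - 1 from by omega] at this
              exact this
            have hstop : s.getD (s.length - t' - 1) one ≠ one := htr2 (by omega)
            refine ⟨x - t' - 1, ⟨?_, by omega,
              by rw [show x - t' - 1 + t' + 1 = x from by omega]; exact hxa⟩, by omega⟩
            rw [hX']
            refine ⟨?_, by omega, fun i hi => ?_⟩
            · rw [Rpi_mem_iff]
              refine ⟨by omega, by omega, fun hsing => ?_⟩
              rw [hsing, Finset.mem_singleton] at hb
              exact hstop hb
            · have := hmatch i (by omega)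
              rwa [List.getD_append _ _ _ _ (by omega),
                show s.length + 1 - x + i = s.length - t' - (x - t' - 1) + i from by omega] at this

/-- state invariant of `S_π`: if reading `s` from the initial state leads to a
non-final state `(X, t)`, then (a) `t` is the length of the longest suffix of `s` consisting
of the letter `one`, and (b) `X` consists exactly of the positions `x ∈ R_π` with
`x ≤ |s| − t` such that the prefix `π_1 ⋯ π_x` matches the suffix of length `x` of
`s_1 ⋯ s_{|s|−t}`. -/
theorem seedAutomaton_state_invariant
    {A : Type*} [DecidableEq A] (m : ℕ) (one : A) (π : ℕ → Finset A)
    (hπ : ∀ i ∈ Finset.Icc 1 m, one ∈ π i)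
    (s : List A) (X : Finset ℕ) (t : ℕ)
    (hq : seedRun m one π (∅, 0) s = (X, t))
    (hnf : X.sup id + t < m) :
    t = (s.reverse.takeWhile (fun a => decide (a = one))).length ∧
    ∀ x : ℕ, x ∈ X ↔ x ∈ Rpi m one π ∧ x ≤ s.length - t ∧
      List.Forall₂ (fun (b : Finset A) (a : A) => a ∈ b)
        ((List.range x).map (fun i => π (i + 1)))
        ((s.take (s.length - t)).drop (s.length - t - x)) := by
  obtain ⟨ha, hb⟩ := seedAux m one π hπ s X t hq hnf
  have htle : t ≤ s.length := ha ▸ trail_len_le one s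
  refine ⟨ha, fun x => ?_⟩
  rw [hb x, forall₂_match_iff π one s (s.length - t) x (by omega)]
  tauto
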